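/- Suppose there exists a t-(v,k,1)-design with t ≤ k/2 + 1, and let t0 be a positive integer with t/2 ≤ t0 ≤ t − 1. Then there exists a (K,F,Q,S) placement delivery array with K = C(v,t0), F = b, Q = b − λ_{t0}, and S = C(v,t0), where λ_{t0} = C(v−t0, t−t0)/C(k−t0, t−t0) and b = C(v,t)/C(k,t). -/

import Mathlib

open Finset

/-- A `(K, F, Q, S)` placement delivery array: an `F × K` array with entries in
`[S] ∪ {*}` (where `none` plays the role of `*`) satisfying conditions C1, C2, C3. -/
def IsPDA {K F S : ℕ} (Q : ℕ) (P : Fin F → Fin K → Option (Fin S)) : Prop :=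
  -- C1: the symbol `*` appears exactly `Q` times in each column
  (∀ k : Fin K, (univ.filter fun j : Fin F => P j k = none).card = Q) ∧
  -- C2: each integer `s ∈ [S]` occurs at least once in the array
  (∀ s : Fin S, ∃ j k, P j k = some s) ∧
  -- C3
  (∀ (j₁ j₂ : Fin F) (k₁ k₂ : Fin K) (s : Fin S), (j₁, k₁) ≠ (j₂, k₂) →
    P j₁ k₁ = some s → P j₂ k₂ = some s →
    j₁ ≠ j₂ ∧ k₁ ≠ k₂ ∧ P j₁ k₂ = none ∧ P j₂ k₁ = none)

/-- There exists a `(K, F, Q, S)` placement delivery array. -/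
def ExistsPDA (K F Q S : ℕ) : Prop :=
  ∃ P : Fin F → Fin K → Option (Fin S), IsPDA Q P

/-- A `t`-`(v,k,1)` design (Steiner system `S(t,k,v)`): `V` is a `v`-set, each block
is a `k`-subset of `V`, and every `t`-subset of `V` lies in exactly one block. -/
def IsSteinerSystem {V : Type} [Fintype V] [DecidableEq V] (B : Finset (Finset V))
    (t v k : ℕ) : Prop :=
  Fintype.card V = v ∧ (∀ blk ∈ B, blk.card = k) ∧
  (∀ T : Finset V, T.card = t → (B.filter fun blk => T ⊆ blk).card = 1)

section PDAAux

variable {V : Type} [DecidableEq V]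

lemma card_filter_superset (T U : Finset V) (hTU : T ⊆ U) (n : ℕ) (hn : T.card ≤ n) :
    ((powersetCard n U).filter fun T' => T ⊆ T').card = (U.card - T.card).choose (n - T.card) := by
  rw [← card_sdiff_of_subset hTU, ← Finset.card_powersetCard]
  apply Finset.card_bij' (fun T' _ => T' \ T) (fun b _ => T ∪ b)
  · intro T' hT'
    simp only [mem_filter, mem_powersetCard] at hT'
    rw [mem_powersetCard]
    exact ⟨sdiff_subset_sdiff hT'.1.1 Subset.rfl, by rw [card_sdiff_of_subset hT'.2, hT'.1.2]⟩
  · intro b hb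
    rw [mem_powersetCard] at hb
    have hdisj : Disjoint T b := Finset.disjoint_left.mpr fun x hx hxb =>
      (mem_sdiff.mp (hb.1 hxb)).2 hx
    simp only [mem_filter, mem_powersetCard]
    refine ⟨⟨union_subset hTU (hb.1.trans sdiff_subset), ?_⟩, subset_union_left⟩
    rw [card_union_of_disjoint hdisj, hb.2]
    omega
  · intro T' hT'
    simp only [mem_filter, mem_powersetCard] at hT'
    exact union_sdiff_of_subset hT'.2
  · intro b hb
    rw [mem_powersetCard] at hb
    have hdisj : Disjoint T b := Finset.disjoint_left.mpr fun x hx hxb =>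
      (mem_sdiff.mp (hb.1 hxb)).2 hx
    exact union_sdiff_cancel_left hdisj

lemma steiner_count {V : Type} [Fintype V] [DecidableEq V] (B : Finset (Finset V))
    (t v k : ℕ) (hdes : IsSteinerSystem B t v k)
    (T : Finset V) (hTt : T.card ≤ t) :
    (B.filter fun blk => T ⊆ blk).card * ((k - T.card).choose (t - T.card))
      = (v - T.card).choose (t - T.card) := by
  classical
  obtain ⟨hv, hk, hdes3⟩ := hdes
  set A := B.filter fun blk => T ⊆ blk with hA
  set E := (powersetCard t (univ : Finset V)).filter (fun T' => T ⊆ T') with hE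
  have hcount : ∀ blk ∈ A, (E.filter fun T' => T' ⊆ blk).card
      = (k - T.card).choose (t - T.card) := by
    intro blk hblk
    rw [hA, mem_filter] at hblk
    have he : E.filter (fun T' => T' ⊆ blk) = (powersetCard t blk).filter fun T' => T ⊆ T' := by
      ext T'
      simp only [hE, mem_filter, mem_powersetCard, filter_filter]
      constructor
      · rintro ⟨⟨_, hc⟩, hT, hb⟩; exact ⟨⟨hb, hc⟩, hT⟩
      · rintro ⟨⟨hb, hc⟩, hT⟩; exact ⟨⟨subset_univ _, hc⟩, hT, hb⟩
    rw [he, card_filter_superset T blk hblk.2 t hTt, hk blk hblk.1]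
  have hcount2 : ∀ T' ∈ E, (A.filter fun blk => T' ⊆ blk).card = 1 := by
    intro T' hT'
    rw [hE, mem_filter, mem_powersetCard] at hT'
    rw [hA, filter_filter]
    have he : B.filter (fun blk => T ⊆ blk ∧ T' ⊆ blk) = B.filter fun blk => T' ⊆ blk := by
      apply filter_congr
      intro blk _
      simp only [iff_iff_implies_and_implies]
      constructor
      · exact fun h => h.2
      · exact fun h => ⟨hT'.2.trans h, h⟩
    rw [he]
    exact hdes3 T' hT'.1.2
  have hEcard : E.card = (v - T.card).choose (t - T.card) := by
    rw [hE, card_filter_superset T univ (subset_univ T) t hTt, card_univ, hv]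
  calc A.card * ((k - T.card).choose (t - T.card))
      = ∑ blk ∈ A, (k - T.card).choose (t - T.card) := by rw [sum_const, smul_eq_mul, mul_comm]
    _ = ∑ blk ∈ A, (E.filter fun T' => T' ⊆ blk).card := by
        exact (sum_congr rfl hcount).symm
    _ = ∑ blk ∈ A, ∑ T' ∈ E, if T' ⊆ blk then 1 else 0 := by
        refine sum_congr rfl fun blk _ => ?_
        rw [card_filter]
    _ = ∑ T' ∈ E, ∑ blk ∈ A, if T' ⊆ blk then 1 else 0 := sum_comm
    _ = ∑ T' ∈ E, (A.filter fun blk => T' ⊆ blk).card := by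
        refine sum_congr rfl fun T' _ => ?_
        rw [card_filter]
    _ = ∑ T' ∈ E, 1 := sum_congr rfl hcount2
    _ = E.card := by rw [card_eq_sum_ones]
    _ = (v - T.card).choose (t - T.card) := hEcard

lemma card_partner (t t0 : ℕ) (h1 : t ≤ 2 * t0) (h2 : t0 ≤ t) (blk T : Finset V)
    (hT : T ⊆ blk) (ht0 : T.card = t0) :
    ((powersetCard t0 blk).filter fun s => (T ∪ s).card = t).card
      = (t0.choose (2 * t0 - t)) * ((blk.card - t0).choose (t - t0)) := by
  have hcard : ((powersetCard (2*t0-t) T) ×ˢ (powersetCard (t-t0) (blk \ T))).card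
      = (t0.choose (2 * t0 - t)) * ((blk.card - t0).choose (t - t0)) := by
    rw [card_product, Finset.card_powersetCard, Finset.card_powersetCard, ht0,
      card_sdiff_of_subset hT, ht0]
  rw [← hcard]
  apply Finset.card_bij' (fun s _ => (s ∩ T, s \ T)) (fun p _ => p.1 ∪ p.2)
  · intro s hs
    simp only [mem_filter, mem_powersetCard] at hs
    obtain ⟨⟨hsub, hcards⟩, hu⟩ := hs
    have e1 : T ∪ s = T ∪ (s \ T) := (union_sdiff_self_eq_union).symm
    have hdisj : Disjoint T (s \ T) := disjoint_sdiff
    have e2 : (T ∪ s).card = T.card + (s \ T).card := by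
      rw [e1, card_union_of_disjoint hdisj]
    have e3 : (s ∩ T).card + (s \ T).card = s.card := card_inter_add_card_sdiff s T
    simp only [mem_product, mem_powersetCard]
    exact ⟨⟨inter_subset_right, by omega⟩, ⟨sdiff_subset_sdiff hsub Subset.rfl, by omega⟩⟩
  · intro p hp
    simp only [mem_product, mem_powersetCard] at hp
    obtain ⟨⟨ha, hac⟩, ⟨hb, hbc⟩⟩ := hp
    have hdisjTb : Disjoint T p.2 := Finset.disjoint_left.mpr fun x hx hxb =>
      (mem_sdiff.mp (hb hxb)).2 hx
    have hdisjab : Disjoint p.1 p.2 := hdisjTb.mono_left ha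
    simp only [mem_filter, mem_powersetCard]
    refine ⟨⟨union_subset (ha.trans hT) (hb.trans sdiff_subset), ?_⟩, ?_⟩
    · rw [card_union_of_disjoint hdisjab]; omega
    · have : T ∪ (p.1 ∪ p.2) = T ∪ p.2 := by
        rw [← union_assoc, union_eq_left.mpr ha]
      rw [this, card_union_of_disjoint hdisjTb]; omega
  · intro s _
    ext x; simp only [mem_union, mem_inter, mem_sdiff]; tauto
  · intro p hp
    simp only [mem_product, mem_powersetCard] at hp
    obtain ⟨⟨ha, _⟩, ⟨hb, _⟩⟩ := hp
    have hbT : ∀ x ∈ p.2, x ∉ T := fun x hx => (mem_sdiff.mp (hb hx)).2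
    have e1 : (p.1 ∪ p.2) ∩ T = p.1 := by
      ext x
      simp only [mem_inter, mem_union]
      constructor
      · rintro ⟨hx | hx, hxT⟩
        · exact hx
        · exact absurd hxT (hbT x hx)
      · intro hx; exact ⟨Or.inl hx, ha hx⟩
    have e2 : (p.1 ∪ p.2) \ T = p.2 := by
      ext x
      simp only [mem_sdiff, mem_union]
      constructor
      · rintro ⟨hx | hx, hxT⟩
        · exact absurd (ha hx) hxT
        · exact hx
      · intro hx; exact ⟨Or.inr hx, hbT x hx⟩
    rw [e1, e2]

lemma exists_sigma (t t0 k : ℕ) (h1 : t ≤ 2 * t0) (h2 : t0 ≤ t) (htk : t ≤ k)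
    (blk : Finset V) (hk : blk.card = k) :
    ∃ σ : Finset V → Finset V,
      (∀ T ∈ powersetCard t0 blk, σ T ∈ powersetCard t0 blk ∧ (T ∪ σ T).card = t) ∧
      (Set.InjOn σ (powersetCard t0 blk)) ∧
      (∀ s ∈ powersetCard t0 blk, ∃ T ∈ powersetCard t0 blk, σ T = s) := by
  classical
  set d := t0.choose (2 * t0 - t) * ((k - t0).choose (t - t0)) with hd
  have hdpos : 0 < d :=
    Nat.mul_pos (Nat.choose_pos (by omega)) (Nat.choose_pos (by omega))
  set N : {x // x ∈ powersetCard t0 blk} → Finset (Finset V) :=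
    fun T => (powersetCard t0 blk).filter fun s => ((T : Finset V) ∪ s).card = t with hN
  have hdeg : ∀ T : {x // x ∈ powersetCard t0 blk}, (N T).card = d := by
    intro T
    obtain ⟨hsub, hcard⟩ := mem_powersetCard.mp T.2
    rw [hN]
    rw [card_partner t t0 h1 h2 blk T hsub hcard, hk]
  have hall : ∀ A : Finset {x // x ∈ powersetCard t0 blk}, A.card ≤ (A.biUnion N).card := by
    intro A
    have hfib : ∀ s ∈ A.biUnion N, (A.filter fun T => s ∈ N T).card ≤ d := by
      intro s hs
      obtain ⟨T₀, _, hT₀⟩ := mem_biUnion.mp hs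
      have hsmem : s ∈ powersetCard t0 blk := (mem_filter.mp hT₀).1
      obtain ⟨hssub, hscard⟩ := mem_powersetCard.mp hsmem
      have hle : (A.filter fun T => s ∈ N T).card
          ≤ ((powersetCard t0 blk).filter fun T' => (s ∪ T').card = t).card := by
        refine card_le_card_of_injOn (fun T => T.1) ?_ ?_
        · intro T hT
          rw [mem_coe, mem_filter] at hT
          have := (mem_filter.mp hT.2).2
          rw [mem_coe, mem_filter]
          exact ⟨T.2, by rwa [union_comm]⟩
        · intro a _ b _ hab
          exact Subtype.ext hab
      rw [card_partner t t0 h1 h2 blk s hssub hscard, hk] at hle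
      exact hle
    have key : A.card * d ≤ (A.biUnion N).card * d := by
      calc A.card * d = ∑ T ∈ A, d := by rw [sum_const, smul_eq_mul, mul_comm]
        _ = ∑ T ∈ A, (N T).card := (sum_congr rfl fun T _ => (hdeg T)).symm
        _ = ∑ T ∈ A, ((A.biUnion N).filter fun s => s ∈ N T).card := by
            refine sum_congr rfl fun T hT => ?_
            congr 1
            ext x
            simp only [mem_filter, mem_biUnion]
            exact ⟨fun hx => ⟨⟨T, hT, hx⟩, hx⟩, fun hx => hx.2⟩
        _ = ∑ T ∈ A, ∑ s ∈ A.biUnion N, if s ∈ N T then 1 else 0 := by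
            refine sum_congr rfl fun T _ => ?_; rw [card_filter]
        _ = ∑ s ∈ A.biUnion N, ∑ T ∈ A, if s ∈ N T then 1 else 0 := sum_comm
        _ = ∑ s ∈ A.biUnion N, (A.filter fun T => s ∈ N T).card := by
            refine sum_congr rfl fun s _ => ?_; rw [card_filter]
        _ ≤ ∑ s ∈ A.biUnion N, d := sum_le_sum hfib
        _ = (A.biUnion N).card * d := by rw [sum_const, smul_eq_mul]
    exact Nat.le_of_mul_le_mul_right key hdpos
  obtain ⟨f, hfinj, hfmem⟩ := (Finset.all_card_le_biUnion_card_iff_exists_injective N).mp hall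
  have hfpc : ∀ T, f T ∈ powersetCard t0 blk := fun T => (mem_filter.mp (hfmem T)).1
  have hfu : ∀ T : {x // x ∈ powersetCard t0 blk}, ((T : Finset V) ∪ f T).card = t :=
    fun T => (mem_filter.mp (hfmem T)).2
  set g : {x // x ∈ powersetCard t0 blk} → {x // x ∈ powersetCard t0 blk} :=
    fun T => ⟨f T, hfpc T⟩ with hg
  have hginj : Function.Injective g := fun a b hab =>
    hfinj (congrArg Subtype.val hab)
  have hgsurj : Function.Surjective g := Finite.surjective_of_injective hginj
  refine ⟨fun T => if h : T ∈ powersetCard t0 blk then f ⟨T, h⟩ else ∅, ?_, ?_, ?_⟩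
  · intro T hT
    dsimp only
    rw [dif_pos hT]
    exact ⟨hfpc ⟨T, hT⟩, hfu ⟨T, hT⟩⟩
  · intro a ha b hb hab
    simp only [mem_coe] at ha hb
    simp only [dif_pos ha, dif_pos hb] at hab
    exact congrArg Subtype.val (hfinj hab)
  · intro s hs
    obtain ⟨T, hT⟩ := hgsurj ⟨s, hs⟩
    refine ⟨T.1, T.2, ?_⟩
    dsimp only
    rw [dif_pos T.2]
    have := congrArg Subtype.val hT
    simpa [hg] using this

end PDAAux

/-- Steiner-system construction (`t ≤ k/2 + 1`), parameter set 2: a `t`-`(v,k,1)`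
design with `t ≤ k/2 + 1` and `t/2 ≤ t0 ≤ t - 1` yields a PDA with
`K = C(v,t0)`, `F = b`, `Q = b - λ_{t0}`, `S = C(v,t0)`, where
`λ_{t0} = C(v-t0,t-t0)/C(k-t0,t-t0)` and `b = C(v,t)/C(k,t)`. -/
theorem exists_pda_of_steiner_small_t_two {V : Type} [Fintype V] [DecidableEq V]
    (B : Finset (Finset V)) (t v k t0 : ℕ) (ht : 0 < t) (htk : t ≤ k) (hkv : k < v)
    (hdes : IsSteinerSystem B t v k)
    (ht2 : 2 * t ≤ k + 2) (ht0 : 0 < t0) (ht0l : t ≤ 2 * t0) (ht0u : t0 ≤ t - 1) :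
    ExistsPDA (Nat.choose v t0) (Nat.choose v t / Nat.choose k t)
      (Nat.choose v t / Nat.choose k t -
        Nat.choose (v - t0) (t - t0) / Nat.choose (k - t0) (t - t0))
      (Nat.choose v t0) := by
  classical
  have htt0 : t0 ≤ t := by omega
  obtain ⟨hv, hkcard, hdes3⟩ := hdes
  have hdes' : IsSteinerSystem B t v k := ⟨hv, hkcard, hdes3⟩
  -- number of blocks
  have hb0 := steiner_count B t v k hdes' ∅ (Nat.zero_le t)
  rw [filter_true_of_mem (fun blk _ => empty_subset blk)] at hb0
  simp only [card_empty, Nat.sub_zero] at hb0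
  have hF : v.choose t / k.choose t = B.card := by
    rw [← hb0, Nat.mul_div_cancel _ (Nat.choose_pos htk)]
  -- lambda
  have hlam : ∀ T : Finset V, T.card = t0 →
      (B.filter fun blk => T ⊆ blk).card
        = (v - t0).choose (t - t0) / (k - t0).choose (t - t0) := by
    intro T hT
    have h := steiner_count B t v k hdes' T (by omega)
    rw [hT] at h
    rw [← h, Nat.mul_div_cancel _ (Nat.choose_pos (by omega))]
  -- equivs
  have hcardB : Fintype.card {x // x ∈ B} = v.choose t / k.choose t := by
    rw [Fintype.card_coe, hF]
  have hcardK : Fintype.card {x // x ∈ powersetCard t0 (univ : Finset V)} = v.choose t0 := by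
    rw [Fintype.card_coe, Finset.card_powersetCard, card_univ, hv]
  set eF := (Fintype.equivFinOfCardEq hcardB).symm with heF
  set eK := (Fintype.equivFinOfCardEq hcardK).symm with heK
  -- sigma function per block
  have hsig : ∀ blk : Finset V, blk ∈ B → ∃ σ : Finset V → Finset V,
      (∀ T ∈ powersetCard t0 blk, σ T ∈ powersetCard t0 blk ∧ (T ∪ σ T).card = t) ∧
      (Set.InjOn σ (powersetCard t0 blk)) ∧
      (∀ s ∈ powersetCard t0 blk, ∃ T ∈ powersetCard t0 blk, σ T = s) :=
    fun blk hblk => exists_sigma t t0 k ht0l htt0 htk blk (hkcard blk hblk)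
  choose σ hσ1 hσ2 hσ3 using hsig
  have hKcard : ∀ c, ((eK c : Finset V)).card = t0 :=
    fun c => (mem_powersetCard.mp (eK c).2).2
  have hmemuniv : ∀ (blk : Finset V) (hb : blk ∈ B) (T : Finset V)
      (hT : T ∈ powersetCard t0 blk),
      σ blk hb T ∈ powersetCard t0 (univ : Finset V) := by
    intro blk hb T hT
    have h := (hσ1 blk hb T hT).1
    rw [mem_powersetCard] at h ⊢
    exact ⟨subset_univ _, h.2⟩
  refine ⟨fun j c =>
    if h : (eK c : Finset V) ⊆ (eF j : Finset V) then
      some (eK.symm ⟨σ (eF j).1 (eF j).2 (eK c).1,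
        hmemuniv (eF j).1 (eF j).2 (eK c).1 (mem_powersetCard.mpr ⟨h, hKcard c⟩)⟩)
    else none, ?_, ?_, ?_⟩
  · -- C1
    intro c
    have hfe : (univ.filter fun j : Fin (v.choose t / k.choose t) =>
        (if h : (eK c : Finset V) ⊆ (eF j : Finset V) then
          some (eK.symm ⟨σ (eF j).1 (eF j).2 (eK c).1,
            hmemuniv (eF j).1 (eF j).2 (eK c).1 (mem_powersetCard.mpr ⟨h, hKcard c⟩)⟩)
        else none) = none)
        = univ.filter fun j => ¬ ((eK c : Finset V) ⊆ (eF j : Finset V)) := by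
      apply filter_congr
      intro j _
      by_cases h : (eK c : Finset V) ⊆ (eF j : Finset V)
      · simp [dif_pos h, h]
      · simp [dif_neg h, h]
    rw [hfe]
    have hbij : (univ.filter fun j : Fin (v.choose t / k.choose t) =>
        ¬ ((eK c : Finset V) ⊆ (eF j : Finset V))).card
        = (B.filter fun blk => ¬ ((eK c : Finset V) ⊆ blk)).card := by
      refine Finset.card_bij' (fun j _ => (eF j).1)
        (fun blk hblk => eF.symm ⟨blk, (mem_filter.mp hblk).1⟩) ?_ ?_ ?_ ?_
      · intro j hj
        rw [mem_filter] at hj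
        exact mem_filter.mpr ⟨(eF j).2, hj.2⟩
      · intro blk hblk
        rw [mem_filter] at hblk
        refine mem_filter.mpr ⟨mem_univ _, ?_⟩
        simp only [Equiv.apply_symm_apply]
        exact hblk.2
      · intro j _
        simp only [Subtype.coe_eta, Equiv.symm_apply_apply]
      · intro blk hblk
        simp only [Equiv.apply_symm_apply]
    rw [hbij]
    have hsplit := card_filter_add_card_filter_not
      (s := B) (p := fun blk => (eK c : Finset V) ⊆ blk)
    have hlc := hlam (eK c : Finset V) (hKcard c)
    have hle : (B.filter fun blk => (eK c : Finset V) ⊆ blk).card ≤ B.card :=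
      card_le_card (filter_subset _ _)
    rw [hF]
    omega
  · -- C2
    intro s
    have hScard : ((eK s : Finset V)).card = t0 := hKcard s
    obtain ⟨T', hT'1, _, hT'3⟩ := exists_subsuperset_card_eq
      (subset_univ (eK s : Finset V)) (by omega : (eK s : Finset V).card ≤ t)
      (by rw [card_univ, hv]; omega)
    have hone := hdes3 T' hT'3
    have hpos : (B.filter fun blk => T' ⊆ blk).Nonempty := by
      rw [← card_pos, hone]; omega
    obtain ⟨blk, hblk⟩ := hpos
    rw [mem_filter] at hblk
    obtain ⟨hblkB, hT'blk⟩ := hblk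
    have hsmem : (eK s : Finset V) ∈ powersetCard t0 blk :=
      mem_powersetCard.mpr ⟨hT'1.trans hT'blk, hScard⟩
    obtain ⟨T, hTmem, hTs⟩ := hσ3 blk hblkB _ hsmem
    obtain ⟨hTblk, hTcard⟩ := mem_powersetCard.mp hTmem
    refine ⟨eF.symm ⟨blk, hblkB⟩, eK.symm ⟨T, mem_powersetCard.mpr ⟨subset_univ _, hTcard⟩⟩, ?_⟩
    have h1 : (eK (eK.symm ⟨T, mem_powersetCard.mpr ⟨subset_univ _, hTcard⟩⟩) : Finset V) = T := by
      rw [Equiv.apply_symm_apply]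
    have h2 : (eF (eF.symm ⟨blk, hblkB⟩) : Finset V) = blk := by
      rw [Equiv.apply_symm_apply]
    have hcond : (eK (eK.symm ⟨T, mem_powersetCard.mpr ⟨subset_univ _, hTcard⟩⟩) : Finset V)
        ⊆ (eF (eF.symm ⟨blk, hblkB⟩) : Finset V) := by
      rw [h1, h2]; exact hTblk
    dsimp only
    rw [dif_pos hcond]
    congr 1
    rw [Equiv.symm_apply_eq]
    apply Subtype.ext
    dsimp only
    rw [show eF (eF.symm ⟨blk, hblkB⟩) = ⟨blk, hblkB⟩ from Equiv.apply_symm_apply _ _,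
      show eK (eK.symm ⟨T, mem_powersetCard.mpr ⟨subset_univ _, hTcard⟩⟩)
        = ⟨T, mem_powersetCard.mpr ⟨subset_univ _, hTcard⟩⟩ from Equiv.apply_symm_apply _ _]
    exact hTs
  · -- C3
    intro j₁ j₂ c₁ c₂ s hne h1 h2
    dsimp only at h1 h2 ⊢
    by_cases hc1 : (eK c₁ : Finset V) ⊆ (eF j₁ : Finset V)
    swap
    · rw [dif_neg hc1] at h1; exact absurd h1 (by simp)
    by_cases hc2 : (eK c₂ : Finset V) ⊆ (eF j₂ : Finset V)
    swap
    · rw [dif_neg hc2] at h2; exact absurd h2 (by simp)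
    rw [dif_pos hc1] at h1
    rw [dif_pos hc2] at h2
    have hss : σ (eF j₁).1 (eF j₁).2 (eK c₁).1 = σ (eF j₂).1 (eF j₂).2 (eK c₂).1 := by
      have hsome := Option.some.inj (h1.trans h2.symm)
      exact congrArg Subtype.val (eK.symm.injective hsome)
    have hT1mem : (eK c₁ : Finset V) ∈ powersetCard t0 (eF j₁ : Finset V) :=
      mem_powersetCard.mpr ⟨hc1, hKcard c₁⟩
    have hT2mem : (eK c₂ : Finset V) ∈ powersetCard t0 (eF j₂ : Finset V) :=
      mem_powersetCard.mpr ⟨hc2, hKcard c₂⟩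
    obtain ⟨hS1mem, hS1card⟩ := hσ1 (eF j₁).1 (eF j₁).2 _ hT1mem
    obtain ⟨hS2mem, hS2card⟩ := hσ1 (eF j₂).1 (eF j₂).2 _ hT2mem
    -- j₁ ≠ j₂
    have hj : j₁ ≠ j₂ := by
      intro hjeq
      subst hjeq
      have hTeq : (eK c₁ : Finset V) = (eK c₂ : Finset V) :=
        hσ2 (eF j₁).1 (eF j₁).2 (mem_coe.mpr hT1mem) (mem_coe.mpr hT2mem) hss
      have : c₁ = c₂ := eK.injective (Subtype.ext hTeq)
      exact hne (by rw [this])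
    have hbne : (eF j₁ : Finset V) ≠ (eF j₂ : Finset V) := by
      intro hbe
      exact hj (eF.injective (Subtype.ext hbe))
    -- not T1 ⊆ b2
    have hnsub12 : ¬ ((eK c₁ : Finset V) ⊆ (eF j₂ : Finset V)) := by
      intro hsub
      have hU : ((eK c₁ : Finset V) ∪ σ (eF j₁).1 (eF j₁).2 (eK c₁).1).card = t := hS1card
      have hUb1 : (eK c₁ : Finset V) ∪ σ (eF j₁).1 (eF j₁).2 (eK c₁).1 ⊆ (eF j₁ : Finset V) :=
        union_subset hc1 (mem_powersetCard.mp hS1mem).1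
      have hUb2 : (eK c₁ : Finset V) ∪ σ (eF j₁).1 (eF j₁).2 (eK c₁).1 ⊆ (eF j₂ : Finset V) := by
        rw [hss]
        exact union_subset hsub (mem_powersetCard.mp hS2mem).1
      have h1lt : 1 < (B.filter fun blk =>
          (eK c₁ : Finset V) ∪ σ (eF j₁).1 (eF j₁).2 (eK c₁).1 ⊆ blk).card := by
        apply one_lt_card.mpr
        exact ⟨_, mem_filter.mpr ⟨(eF j₁).2, hUb1⟩, _, mem_filter.mpr ⟨(eF j₂).2, hUb2⟩, hbne⟩
      rw [hdes3 _ hU] at h1lt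
      omega
    have hnsub21 : ¬ ((eK c₂ : Finset V) ⊆ (eF j₁ : Finset V)) := by
      intro hsub
      have hU : ((eK c₂ : Finset V) ∪ σ (eF j₂).1 (eF j₂).2 (eK c₂).1).card = t := hS2card
      have hUb2 : (eK c₂ : Finset V) ∪ σ (eF j₂).1 (eF j₂).2 (eK c₂).1 ⊆ (eF j₂ : Finset V) :=
        union_subset hc2 (mem_powersetCard.mp hS2mem).1
      have hUb1 : (eK c₂ : Finset V) ∪ σ (eF j₂).1 (eF j₂).2 (eK c₂).1 ⊆ (eF j₁ : Finset V) := by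
        rw [← hss]
        exact union_subset hsub (mem_powersetCard.mp hS1mem).1
      have h1lt : 1 < (B.filter fun blk =>
          (eK c₂ : Finset V) ∪ σ (eF j₂).1 (eF j₂).2 (eK c₂).1 ⊆ blk).card := by
        apply one_lt_card.mpr
        exact ⟨_, mem_filter.mpr ⟨(eF j₁).2, hUb1⟩, _, mem_filter.mpr ⟨(eF j₂).2, hUb2⟩, hbne⟩
      rw [hdes3 _ hU] at h1lt
      omega
    have hc : c₁ ≠ c₂ := by
      intro hceq
      subst hceq
      exact hnsub12 hc2
    exact ⟨hj, hc, dif_neg hnsub21, dif_neg hnsub12⟩
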